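/- arXiv:2307.03518 — 8 statements merged into one kernel-verified Lean document; each statement's English description precedes it below -/
import Mathlib

section
/- An instance of Knapsack (N, c, d, B, D) is a yes-instance if and only if the constructed instance of NAP on a star tree is a yes-instance, where the star has center w, leaves N, edge weights λ((w,x_i)) = d(x_i), and each leaf x_i has two projects (cost 0, probability 0) and (cost c(x_i), probability 1), with budget B and diversity threshold D. -/
/-- Knapsack `(N,c,d,B,D)` is a yes-instance iff the constructed NAP instance on the
star (edge weight `d x` to leaf `x`, projects `(0,0)` and `(c x, 1)`) is a yes-instance:
a project selection is a choice `σ : ι → Bool` (true = cost-`c x` project of probability 1),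
with total cost `≤ B` and `PD = ∑ λ·w ≥ D`. -/
theorem stmt_3 {ι : Type*} [DecidableEq ι] (N : Finset ι) (c d : ι → ℕ) (B D : ℕ) :
    (∃ N' ⊆ N, (∑ x ∈ N', c x) ≤ B ∧ D ≤ ∑ x ∈ N', d x) ↔
    (∃ σ : ι → Bool, (∑ x ∈ N, if σ x then c x else 0) ≤ B ∧
      (D : ℚ) ≤ ∑ x ∈ N, (d x : ℚ) * (if σ x then 1 else 0)) := by
  constructor
  · rintro ⟨N', hsub, hc, hd⟩
    refine ⟨fun x => x ∈ N', ?_, ?_⟩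
    · have : (∑ x ∈ N, if (x ∈ N' : Bool) then c x else 0) = ∑ x ∈ N', c x := by
        rw [← Finset.sum_filter]
        congr 1
        ext x
        simp only [Finset.mem_filter, decide_eq_true_eq]
        exact ⟨fun h => h.2, fun h => ⟨hsub h, h⟩⟩
      calc (∑ x ∈ N, if (fun x => (x ∈ N' : Bool)) x then c x else 0)
          = ∑ x ∈ N', c x := this
        _ ≤ B := hc
    · have : (∑ x ∈ N, (d x : ℚ) * (if (x ∈ N' : Bool) then 1 else 0))
          = ∑ x ∈ N', (d x : ℚ) := by
        simp only [mul_ite, mul_one, mul_zero]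
        rw [← Finset.sum_filter]
        congr 1
        ext x
        simp only [Finset.mem_filter, decide_eq_true_eq]
        exact ⟨fun h => h.2, fun h => ⟨hsub h, h⟩⟩
      rw [this]
      exact_mod_cast hd
  · rintro ⟨σ, hc, hd⟩
    refine ⟨N.filter (fun x => σ x), Finset.filter_subset _ _, ?_, ?_⟩
    · rw [Finset.sum_filter]; exact hc
    · have : (∑ x ∈ N, (d x : ℚ) * (if σ x then 1 else 0))
          = ((∑ x ∈ N.filter (fun x => σ x), d x : ℕ) : ℚ) := by
        push_cast
        rw [Finset.sum_filter]
        simp [mul_comm]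
      rw [this] at hd
      exact_mod_cast hd
end

section
/- The Multi-Subset Sum instance (Z, Q, k) has a solution if and only if the constructed Multiple-Choice Knapsack instance with k classes N_1,...,N_k, where class N_i contains items a_{i,j} of cost and value both equal to 2^{ℓ·i} + z_j (with 2^ℓ larger than max Z), budget and value threshold both equal to Q + Σ_{i=1}^k 2^{ℓ·i}, has a solution. -/
/-- The Multi-Subset Sum instance `(Z,Q,k)` has a solution iff the constructed MCKP
instance has one: `k` classes, class `i` containing items of cost = value
`2^(ℓ·i) + z_j`, with budget and value threshold both `Q + ∑_{i=1}^k 2^(ℓ·i)`,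
where `2^ℓ` exceeds every element of `Z`. -/
theorem stmt_6 (n k ℓ Q : ℕ) (z : Fin n → ℕ) (hz : ∀ j, 0 < z j)
    (hℓ : ∀ j, z j < 2 ^ ℓ) :
    (∃ q : Fin n → ℕ, (∑ j, q j * z j) = Q ∧ (∑ j, q j) = k) ↔
    (∃ f : Fin k → Fin n,
      (∑ i : Fin k, (2 ^ (ℓ * (i.1 + 1)) + z (f i))) ≤ Q + (∑ i : Fin k, 2 ^ (ℓ * (i.1 + 1))) ∧
      Q + (∑ i : Fin k, 2 ^ (ℓ * (i.1 + 1))) ≤ ∑ i : Fin k, (2 ^ (ℓ * (i.1 + 1)) + z (f i))) := by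
  constructor
  · rintro ⟨q, hQ, hk⟩
    set L := (List.finRange n).flatMap (fun j => List.replicate (q j) j) with hL
    have hlen : L.length = k := by
      rw [← hk, hL]
      simp [List.length_flatMap, Fin.sum_univ_def, Function.comp_def]
    subst hlen
    refine ⟨L.get, ?_, ?_⟩ <;>
    · rw [Finset.sum_add_distrib]
      have key : ∑ i : Fin L.length, z (L.get i) = Q := by
        have h1 : ∑ i : Fin L.length, z (L.get i) = (L.map z).sum :=
          Fin.sum_univ_fun_getElem L z
        rw [h1, ← hQ, hL]
        simp [List.map_flatMap, List.flatMap, List.sum_flatten, Function.comp_def,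
          Fin.sum_univ_def, List.sum_replicate, smul_eq_mul, mul_comm]
      omega
  · rintro ⟨f, h1, h2⟩
    rw [Finset.sum_add_distrib] at h1 h2
    have hE : ∑ i, z (f i) = Q := by omega
    refine ⟨fun j => (Finset.univ.filter (fun i => f i = j)).card, ?_, ?_⟩
    · rw [← hE, ← Finset.sum_fiberwise Finset.univ f (fun i => z (f i))]
      refine Finset.sum_congr rfl fun j _ => ?_
      rw [Finset.sum_congr rfl (fun i hi => ?_), Finset.sum_const, smul_eq_mul]
      rw [(Finset.mem_filter.mp hi).2]
    · have h := Finset.card_eq_sum_card_fiberwise (f := f) (s := Finset.univ)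
        (t := Finset.univ) (fun i _ => Finset.mem_univ _)
      rw [Finset.card_fin] at h
      exact h.symm
end

section
/- Correctness of the DP over costs for MCKP: for every i ∈ [m] and vector p = (p_1,...,p_{k-1}) of multiplicities of the costs c_1 < ... < c_{k-1} (where c_k is the largest cost), the table value F[i,p] defined by the recurrence F[i+1,p] = max over a ∈ N_{i+1} of (F[i, p with coordinate j decremented] + d(a) if c(a)=c_j < c_k and p_j ≥ 1; F[i,p] + d(a) if c(a) = c_k) equals the maximum of d_Σ(S) over all sets S containing exactly one item from each of N_1,...,N_i and exactly p_j items of cost c_j for each j < k (and equals -∞ if no such set exists). -/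
open Classical Finset in
/-- Correctness of the DP over costs for MCKP. Costs are `cVal 0 < … < cVal k`
(so `cVal (Fin.last k)` is the largest cost `c_k`); a vector `p : Fin k → ℕ`
records, for each non-maximal cost, how many chosen items have that cost.
If the table `F` satisfies the initialization from singletons of `N_1` and the
recurrence
`F[i+1,p] = max_{a ∈ N_{i+1}} (F[i, p - e_j] + d a  if c a = c_j < c_k ∧ p_j ≥ 1;
                               F[i, p] + d a        if c a = c_k)`,
then `F[i,p]` equals the maximum of `d_Σ(S)` over all selections of exactly one
item from each of `N_1,…,N_i` whose cost-multiplicity vector is `p`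
(and `⊥ = -∞` if no such selection exists). -/
theorem stmt_9 {α : Type*} [Fintype α] [DecidableEq α]
    (m k : ℕ) (N : Fin m → Finset α) (c d : α → ℕ)
    (cVal : Fin (k + 1) → ℕ) (hmono : StrictMono cVal)
    (hcov : ∀ a : α, ∃ j, c a = cVal j)
    (F : ℕ → (Fin k → ℕ) → WithBot ℕ)
    (hinit : ∀ p : Fin k → ℕ, F 1 p =
      (if hm : 0 < m then
        (N ⟨0, hm⟩).sup (fun a =>
          if (∃ j : Fin k, c a = cVal j.castSucc ∧ p = Pi.single j 1) ∨
             (c a = cVal (Fin.last k) ∧ p = 0)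
          then (d a : WithBot ℕ) else ⊥)
      else ⊥))
    (hrec : ∀ i : ℕ, 1 ≤ i → ∀ hi : i < m, ∀ p : Fin k → ℕ,
      F (i + 1) p = (N ⟨i, hi⟩).sup (fun a =>
        (Finset.univ.sup (fun j : Fin k =>
          if c a = cVal j.castSucc ∧ 1 ≤ p j
          then F i (Function.update p j (p j - 1)) + (d a : WithBot ℕ) else ⊥))
        ⊔ (if c a = cVal (Fin.last k) then F i p + (d a : WithBot ℕ) else ⊥))) :
    ∀ i : ℕ, 1 ≤ i → i ≤ m → ∀ p : Fin k → ℕ,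
      F i p = ((Finset.univ : Finset (Fin m → α)).filter (fun f =>
          (∀ j : Fin m, j.1 < i → f j ∈ N j) ∧
          (∀ jc : Fin k, (Finset.univ.filter (fun j : Fin m =>
              j.1 < i ∧ c (f j) = cVal jc.castSucc)).card = p jc))).sup
        (fun f =>
          ((∑ j ∈ Finset.univ.filter (fun j : Fin m => j.1 < i), d (f j) : ℕ) : WithBot ℕ)) := by
  have hinj := hmono.injective
  have hne_last : ∀ j : Fin k, cVal j.castSucc ≠ cVal (Fin.last k) :=
    fun j => ne_of_lt (hmono (Fin.castSucc_lt_last j))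
  have hcs_inj : ∀ j j' : Fin k, cVal j.castSucc = cVal j'.castSucc → j = j' :=
    fun j j' h => Fin.castSucc_inj.mp (hinj h)
  -- sum over j < i+1 splits off the last item
  have hsum : ∀ (i : ℕ) (hi : i < m) (f : Fin m → α),
      (∑ j ∈ Finset.univ.filter (fun j : Fin m => j.1 < i + 1), d (f j))
        = (∑ j ∈ Finset.univ.filter (fun j : Fin m => j.1 < i), d (f j)) + d (f ⟨i, hi⟩) := by
    intro i hi f
    have h : Finset.univ.filter (fun j : Fin m => j.1 < i + 1)
        = insert ⟨i, hi⟩ (Finset.univ.filter (fun j : Fin m => j.1 < i)) := by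
      ext j
      simp only [Finset.mem_filter, Finset.mem_univ, true_and, Finset.mem_insert, Fin.ext_iff]
      omega
    rw [h, Finset.sum_insert (by simp), add_comm]
  -- the count of cost-x items among the first i+1 coordinates
  have hcard : ∀ (i : ℕ) (hi : i < m) (f : Fin m → α) (x : ℕ),
      (Finset.univ.filter (fun j : Fin m => j.1 < i + 1 ∧ c (f j) = x)).card
        = (Finset.univ.filter (fun j : Fin m => j.1 < i ∧ c (f j) = x)).card
          + (if c (f ⟨i, hi⟩) = x then 1 else 0) := by
    intro i hi f x
    by_cases hc : c (f ⟨i, hi⟩) = x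
    · rw [if_pos hc]
      have h : Finset.univ.filter (fun j : Fin m => j.1 < i + 1 ∧ c (f j) = x)
          = insert ⟨i, hi⟩ (Finset.univ.filter (fun j : Fin m => j.1 < i ∧ c (f j) = x)) := by
        ext j
        simp only [Finset.mem_filter, Finset.mem_univ, true_and, Finset.mem_insert]
        constructor
        · rintro ⟨h1, h2⟩
          rcases Nat.lt_succ_iff_lt_or_eq.mp h1 with h | h
          · exact Or.inr ⟨h, h2⟩
          · exact Or.inl (Fin.ext h)
        · rintro (h | ⟨h1, h2⟩)
          · subst h; exact ⟨i.lt_succ_self, hc⟩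
          · exact ⟨by omega, h2⟩
      rw [h, Finset.card_insert_of_notMem (by simp)]
    · rw [if_neg hc, add_zero]
      congr 1
      ext j
      simp only [Finset.mem_filter, Finset.mem_univ, true_and]
      constructor
      · rintro ⟨h1, h2⟩
        refine ⟨?_, h2⟩
        rcases Nat.lt_succ_iff_lt_or_eq.mp h1 with h | h
        · exact h
        · exact absurd h2 (by rw [show j = ⟨i, hi⟩ from Fin.ext h]; exact hc)
      · rintro ⟨h1, h2⟩; exact ⟨by omega, h2⟩
  -- adding a constant commutes with Finset.sup in WithBot ℕ
  have haddsup : ∀ (s : Finset (Fin m → α)) (g : (Fin m → α) → WithBot ℕ) (x : ℕ),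
      s.sup g + (x : WithBot ℕ) = s.sup (fun b => g b + (x : WithBot ℕ)) := by
    intro s g x
    induction s using Finset.induction with
    | empty => simp
    | insert _ _ hnot ih =>
        rw [Finset.sup_insert, Finset.sup_insert, ← ih]
        exact (max_add_add_right _ _ _).symm
  refine Nat.le_induction ?_ ?_
  · -- base case i = 1
    intro h1m p
    have hm : 0 < m := h1m
    rw [hinit p, dif_pos hm]
    have hsingle : Finset.univ.filter (fun j : Fin m => j.1 < 1) = {(⟨0, hm⟩ : Fin m)} := by
      ext j
      simp only [Finset.mem_filter, Finset.mem_univ, true_and, Finset.mem_singleton, Fin.ext_iff]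
      omega
    have hcard1 : ∀ (f : Fin m → α) (x : ℕ),
        (Finset.univ.filter (fun j : Fin m => j.1 < 1 ∧ c (f j) = x)).card
          = if c (f ⟨0, hm⟩) = x then 1 else 0 := by
      intro f x
      by_cases h : c (f ⟨0, hm⟩) = x
      · rw [if_pos h]
        have : Finset.univ.filter (fun j : Fin m => j.1 < 1 ∧ c (f j) = x) = {(⟨0, hm⟩ : Fin m)} := by
          ext j
          simp only [Finset.mem_filter, Finset.mem_univ, true_and, Finset.mem_singleton]
          constructor
          · rintro ⟨h1, h2⟩; exact Fin.ext (show j.1 = 0 by omega)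
          · rintro rfl; exact ⟨Nat.zero_lt_one, h⟩
        rw [this, Finset.card_singleton]
      · rw [if_neg h]
        have : Finset.univ.filter (fun j : Fin m => j.1 < 1 ∧ c (f j) = x) = ∅ := by
          ext j
          simp only [Finset.mem_filter, Finset.mem_univ, true_and, Finset.notMem_empty, iff_false]
          rintro ⟨h1, h2⟩
          exact h (by rw [show (⟨0, hm⟩ : Fin m) = j from Fin.ext (show (0:ℕ) = j.1 by omega)]; exact h2)
        rw [this, Finset.card_empty]
    apply le_antisymm
    · apply Finset.sup_le
      intro a ha
      by_cases hcond : (∃ j : Fin k, c a = cVal j.castSucc ∧ p = Pi.single j 1) ∨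
          (c a = cVal (Fin.last k) ∧ p = 0)
      · rw [if_pos hcond]
        have hmem : (fun _ : Fin m => a) ∈ Finset.univ.filter (fun f : Fin m → α =>
            (∀ j : Fin m, j.1 < 1 → f j ∈ N j) ∧
            (∀ jc : Fin k, (Finset.univ.filter (fun j : Fin m =>
                j.1 < 1 ∧ c (f j) = cVal jc.castSucc)).card = p jc)) := by
          simp only [Finset.mem_filter, Finset.mem_univ, true_and]
          constructor
          · intro j hj
            rw [show j = ⟨0, hm⟩ from Fin.ext (show j.1 = 0 by omega)]
            exact ha
          · intro jc
            rw [hcard1 (fun _ => a) (cVal jc.castSucc)]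
            rcases hcond with ⟨j, hcj, rfl⟩ | ⟨hcl, rfl⟩
            · by_cases hjc : jc = j
              · subst hjc
                rw [if_pos hcj, Pi.single_eq_same]
              · rw [if_neg, Pi.single_eq_of_ne hjc]
                intro h
                exact hjc (hcs_inj jc j (by rw [← h, ← hcj]))
            · rw [if_neg, Pi.zero_apply]
              intro h
              exact hne_last jc (by rw [← h, ← hcl])
        have hval : ((∑ j ∈ Finset.univ.filter (fun j : Fin m => j.1 < 1),
            d ((fun _ : Fin m => a) j) : ℕ) : WithBot ℕ) = (d a : WithBot ℕ) := by
          rw [hsingle, Finset.sum_singleton]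
        exact le_trans (le_of_eq hval.symm) (Finset.le_sup (f := fun f : Fin m → α =>
          ((∑ j ∈ Finset.univ.filter (fun j : Fin m => j.1 < 1), d (f j) : ℕ) : WithBot ℕ)) hmem)
      · rw [if_neg hcond]; exact bot_le
    · apply Finset.sup_le
      intro f hf
      simp only [Finset.mem_filter, Finset.mem_univ, true_and] at hf
      obtain ⟨hfN, hfcard⟩ := hf
      have haN : f ⟨0, hm⟩ ∈ N ⟨0, hm⟩ := hfN ⟨0, hm⟩ Nat.zero_lt_one
      refine le_trans ?_ (Finset.le_sup haN)
      have hcond : (∃ j : Fin k, c (f ⟨0, hm⟩) = cVal j.castSucc ∧ p = Pi.single j 1) ∨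
          (c (f ⟨0, hm⟩) = cVal (Fin.last k) ∧ p = 0) := by
        obtain ⟨j₀, hj₀⟩ := hcov (f ⟨0, hm⟩)
        rcases Fin.eq_castSucc_or_eq_last j₀ with ⟨jc₀, rfl⟩ | rfl
        · left
          refine ⟨jc₀, hj₀, funext fun jc => ?_⟩
          rw [← hfcard jc, hcard1 f (cVal jc.castSucc)]
          by_cases hjc : jc = jc₀
          · subst hjc; rw [if_pos hj₀, Pi.single_eq_same]
          · rw [if_neg, Pi.single_eq_of_ne hjc]
            intro h
            exact hjc (hcs_inj jc jc₀ (by rw [← h, ← hj₀]))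
        · right
          refine ⟨hj₀, funext fun jc => ?_⟩
          rw [← hfcard jc, hcard1 f (cVal jc.castSucc), if_neg, Pi.zero_apply]
          intro h
          exact hne_last jc (by rw [← h, ← hj₀])
      rw [if_pos hcond, hsingle, Finset.sum_singleton]
  · -- inductive step
    intro i hi1 IH hi1m p
    have hi : i < m := hi1m
    have him : i ≤ m := le_of_lt hi
    rw [hrec i hi1 hi p]
    apply le_antisymm
    · apply Finset.sup_le
      intro a ha
      apply sup_le
      · apply Finset.sup_le
        intro j _
        by_cases hcj : c a = cVal j.castSucc ∧ 1 ≤ p j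
        · rw [if_pos hcj]
          obtain ⟨hcj1, hpj⟩ := hcj
          rw [IH him (Function.update p j (p j - 1)), haddsup]
          apply Finset.sup_le
          intro f hf
          simp only [Finset.mem_filter, Finset.mem_univ, true_and] at hf
          obtain ⟨hfN, hfcard⟩ := hf
          set f' := Function.update f ⟨i, hi⟩ a with hf'def
          have hupd : ∀ j' : Fin m, j'.1 < i → f' j' = f j' := by
            intro j' hj'
            exact Function.update_of_ne (fun h => by simp [Fin.ext_iff] at h; omega) _ _
          have hf'i : f' ⟨i, hi⟩ = a := Function.update_self _ _ _
          have hfiltc : ∀ x : ℕ, Finset.univ.filter (fun j' : Fin m => j'.1 < i ∧ c (f' j') = x)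
              = Finset.univ.filter (fun j' : Fin m => j'.1 < i ∧ c (f j') = x) := by
            intro x
            ext j'
            simp only [Finset.mem_filter, Finset.mem_univ, true_and]
            constructor
            · rintro ⟨h1, h2⟩; exact ⟨h1, by rw [← hupd j' h1]; exact h2⟩
            · rintro ⟨h1, h2⟩; exact ⟨h1, by rw [hupd j' h1]; exact h2⟩
          have hmem : f' ∈ Finset.univ.filter (fun f : Fin m → α =>
              (∀ j' : Fin m, j'.1 < i + 1 → f j' ∈ N j') ∧
              (∀ jc : Fin k, (Finset.univ.filter (fun j' : Fin m =>
                  j'.1 < i + 1 ∧ c (f j') = cVal jc.castSucc)).card = p jc)) := by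
            simp only [Finset.mem_filter, Finset.mem_univ, true_and]
            constructor
            · intro j' hj'
              rcases Nat.lt_succ_iff_lt_or_eq.mp hj' with h | h
              · rw [hupd j' h]; exact hfN j' h
              · rw [show j' = ⟨i, hi⟩ from Fin.ext h, hf'i]; exact ha
            · intro jc
              rw [hcard i hi f' (cVal jc.castSucc), hfiltc, hfcard jc, hf'i]
              by_cases hjc : jc = j
              · subst hjc
                rw [if_pos hcj1, Function.update_self]
                omega
              · rw [Function.update_of_ne hjc, if_neg, add_zero]
                intro h
                exact hjc (hcs_inj jc j (by rw [← h, ← hcj1]))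
          have hval : ((∑ j' ∈ Finset.univ.filter (fun j' : Fin m => j'.1 < i),
                d (f j') : ℕ) : WithBot ℕ) + (d a : WithBot ℕ)
              = ((∑ j' ∈ Finset.univ.filter (fun j' : Fin m => j'.1 < i + 1),
                d (f' j') : ℕ) : WithBot ℕ) := by
            rw [hsum i hi f', hf'i]
            have hs : (∑ j' ∈ Finset.univ.filter (fun j' : Fin m => j'.1 < i), d (f' j'))
                = ∑ j' ∈ Finset.univ.filter (fun j' : Fin m => j'.1 < i), d (f j') := by
              refine Finset.sum_congr rfl fun j' hj' => ?_
              simp only [Finset.mem_filter, Finset.mem_univ, true_and] at hj'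
              rw [hupd j' hj']
            rw [hs]
            exact (Nat.cast_add _ _).symm
          rw [hval]
          exact Finset.le_sup (f := fun g : Fin m → α =>
            ((∑ j ∈ Finset.univ.filter (fun j : Fin m => j.1 < i + 1), d (g j) : ℕ) : WithBot ℕ)) hmem
        · rw [if_neg hcj]; exact bot_le
      · by_cases hcl : c a = cVal (Fin.last k)
        · rw [if_pos hcl, IH him p, haddsup]
          apply Finset.sup_le
          intro f hf
          simp only [Finset.mem_filter, Finset.mem_univ, true_and] at hf
          obtain ⟨hfN, hfcard⟩ := hf
          set f' := Function.update f ⟨i, hi⟩ a with hf'def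
          have hupd : ∀ j' : Fin m, j'.1 < i → f' j' = f j' := by
            intro j' hj'
            exact Function.update_of_ne (fun h => by simp [Fin.ext_iff] at h; omega) _ _
          have hf'i : f' ⟨i, hi⟩ = a := Function.update_self _ _ _
          have hfiltc : ∀ x : ℕ, Finset.univ.filter (fun j' : Fin m => j'.1 < i ∧ c (f' j') = x)
              = Finset.univ.filter (fun j' : Fin m => j'.1 < i ∧ c (f j') = x) := by
            intro x
            ext j'
            simp only [Finset.mem_filter, Finset.mem_univ, true_and]
            constructor
            · rintro ⟨h1, h2⟩; exact ⟨h1, by rw [← hupd j' h1]; exact h2⟩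
            · rintro ⟨h1, h2⟩; exact ⟨h1, by rw [hupd j' h1]; exact h2⟩
          have hmem : f' ∈ Finset.univ.filter (fun f : Fin m → α =>
              (∀ j' : Fin m, j'.1 < i + 1 → f j' ∈ N j') ∧
              (∀ jc : Fin k, (Finset.univ.filter (fun j' : Fin m =>
                  j'.1 < i + 1 ∧ c (f j') = cVal jc.castSucc)).card = p jc)) := by
            simp only [Finset.mem_filter, Finset.mem_univ, true_and]
            constructor
            · intro j' hj'
              rcases Nat.lt_succ_iff_lt_or_eq.mp hj' with h | h
              · rw [hupd j' h]; exact hfN j' h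
              · rw [show j' = ⟨i, hi⟩ from Fin.ext h, hf'i]; exact ha
            · intro jc
              rw [hcard i hi f' (cVal jc.castSucc), hfiltc, hfcard jc, hf'i, if_neg, add_zero]
              intro h
              exact hne_last jc (by rw [← h, ← hcl])
          have hval : ((∑ j' ∈ Finset.univ.filter (fun j' : Fin m => j'.1 < i),
                d (f j') : ℕ) : WithBot ℕ) + (d a : WithBot ℕ)
              = ((∑ j' ∈ Finset.univ.filter (fun j' : Fin m => j'.1 < i + 1),
                d (f' j') : ℕ) : WithBot ℕ) := by
            rw [hsum i hi f', hf'i]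
            have hs : (∑ j' ∈ Finset.univ.filter (fun j' : Fin m => j'.1 < i), d (f' j'))
                = ∑ j' ∈ Finset.univ.filter (fun j' : Fin m => j'.1 < i), d (f j') := by
              refine Finset.sum_congr rfl fun j' hj' => ?_
              simp only [Finset.mem_filter, Finset.mem_univ, true_and] at hj'
              rw [hupd j' hj']
            rw [hs]
            exact (Nat.cast_add _ _).symm
          rw [hval]
          exact Finset.le_sup (f := fun g : Fin m → α =>
            ((∑ j ∈ Finset.univ.filter (fun j : Fin m => j.1 < i + 1), d (g j) : ℕ) : WithBot ℕ)) hmem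
        · rw [if_neg hcl]; exact bot_le
    · apply Finset.sup_le
      intro f hf
      simp only [Finset.mem_filter, Finset.mem_univ, true_and] at hf
      obtain ⟨hfN, hfcard⟩ := hf
      have haN : f ⟨i, hi⟩ ∈ N ⟨i, hi⟩ := hfN ⟨i, hi⟩ i.lt_succ_self
      refine le_trans ?_ (Finset.le_sup haN)
      rw [hsum i hi f]
      obtain ⟨j₀, hj₀⟩ := hcov (f ⟨i, hi⟩)
      rcases Fin.eq_castSucc_or_eq_last j₀ with ⟨jc₀, rfl⟩ | rfl
      · -- cost of the new item is a non-maximal cost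
        have hpj : (Finset.univ.filter (fun j : Fin m =>
            j.1 < i ∧ c (f j) = cVal jc₀.castSucc)).card + 1 = p jc₀ := by
          rw [← hfcard jc₀, hcard i hi f (cVal jc₀.castSucc), if_pos hj₀]
        have hp1 : 1 ≤ p jc₀ := by omega
        have hmem : f ∈ Finset.univ.filter (fun f : Fin m → α =>
            (∀ j : Fin m, j.1 < i → f j ∈ N j) ∧
            (∀ jc : Fin k, (Finset.univ.filter (fun j : Fin m =>
                j.1 < i ∧ c (f j) = cVal jc.castSucc)).card
              = Function.update p jc₀ (p jc₀ - 1) jc)) := by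
          simp only [Finset.mem_filter, Finset.mem_univ, true_and]
          refine ⟨fun j hj => hfN j (by omega), fun jc => ?_⟩
          by_cases h : jc = jc₀
          · subst h
            rw [Function.update_self]
            omega
          · rw [Function.update_of_ne h, ← hfcard jc, hcard i hi f (cVal jc.castSucc),
              if_neg, add_zero]
            intro hcc
            exact h (hcs_inj jc jc₀ (by rw [← hcc, ← hj₀]))
        have hb : ((((∑ j ∈ Finset.univ.filter (fun j : Fin m => j.1 < i), d (f j))
              + d (f ⟨i, hi⟩) : ℕ)) : WithBot ℕ)
            ≤ F i (Function.update p jc₀ (p jc₀ - 1)) + (d (f ⟨i, hi⟩) : WithBot ℕ) := by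
          rw [IH him, Nat.cast_add]
          exact add_le_add_left (Finset.le_sup (f := fun g : Fin m → α =>
            ((∑ j ∈ Finset.univ.filter (fun j : Fin m => j.1 < i), d (g j) : ℕ) : WithBot ℕ)) hmem) _
        refine le_trans hb (le_trans ?_ le_sup_left)
        refine le_trans ?_ (Finset.le_sup (Finset.mem_univ jc₀))
        rw [if_pos ⟨hj₀, hp1⟩]
      · -- cost of the new item is the maximal cost
        have hmem : f ∈ Finset.univ.filter (fun f : Fin m → α =>
            (∀ j : Fin m, j.1 < i → f j ∈ N j) ∧
            (∀ jc : Fin k, (Finset.univ.filter (fun j : Fin m =>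
                j.1 < i ∧ c (f j) = cVal jc.castSucc)).card = p jc)) := by
          simp only [Finset.mem_filter, Finset.mem_univ, true_and]
          refine ⟨fun j hj => hfN j (by omega), fun jc => ?_⟩
          rw [← hfcard jc, hcard i hi f (cVal jc.castSucc), if_neg, add_zero]
          intro hcc
          exact hne_last jc (by rw [← hcc, ← hj₀])
        have hb : ((((∑ j ∈ Finset.univ.filter (fun j : Fin m => j.1 < i), d (f j))
              + d (f ⟨i, hi⟩) : ℕ)) : WithBot ℕ)
            ≤ F i p + (d (f ⟨i, hi⟩) : WithBot ℕ) := by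
          rw [IH him, Nat.cast_add]
          exact add_le_add_left (Finset.le_sup (f := fun g : Fin m → α =>
            ((∑ j ∈ Finset.univ.filter (fun j : Fin m => j.1 < i), d (g j) : ℕ) : WithBot ℕ)) hmem) _
        refine le_trans hb (le_trans ?_ le_sup_right)
        rw [if_pos hj₀]
end

section
/- An MCKP instance (N, {N_1,...,N_m}, c, d, B, D) is a yes-instance if and only if the GNAP instance on the star with center v, leaves x_1,...,x_m, all edge weights 1, project lists P_i = {(c(a), d(a)/D) : a ∈ N_i}, budget B and diversity threshold 1 is a yes-instance, provided 0 ≤ d(a) ≤ D for all items a. -/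
/-- An MCKP instance `(N, c, d, B, D)` with `0 ≤ d a ≤ D` is a yes-instance iff
the GNAP instance on the star with unit edge weights, project lists
`P_i = {(c a, d a / D) : a ∈ N_i}`, budget `B` and diversity threshold `1`,
is a yes-instance (on a star with unit weights, PD is the sum of the chosen
survival probabilities). -/
theorem stmt_11 {α : Type*} (m : ℕ) (N : Fin m → Finset α) (c d : α → ℕ)
    (B D : ℕ) (hD : 0 < D) (hval : ∀ i, ∀ a ∈ N i, d a ≤ D) :
    (∃ f : Fin m → α, (∀ i, f i ∈ N i) ∧ (∑ i, c (f i)) ≤ B ∧ D ≤ ∑ i, d (f i)) ↔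
    (∃ f : Fin m → α, (∀ i, f i ∈ N i) ∧ (∑ i, c (f i)) ≤ B ∧
      (1 : ℚ) ≤ ∑ i, (1 : ℚ) * ((d (f i) : ℚ) / (D : ℚ))) := by
  have hDQ : (0 : ℚ) < (D : ℚ) := by exact_mod_cast hD
  have key : ∀ f : Fin m → α,
      (D ≤ ∑ i, d (f i)) ↔ (1 : ℚ) ≤ ∑ i, (1 : ℚ) * ((d (f i) : ℚ) / (D : ℚ)) := by
    intro f
    have : ∑ i, (1 : ℚ) * ((d (f i) : ℚ) / (D : ℚ))
        = ((∑ i, d (f i) : ℕ) : ℚ) / (D : ℚ) := by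
      push_cast
      rw [Finset.sum_div]
      simp
    rw [this, le_div_iff₀ hDQ, one_mul]
    exact_mod_cast Iff.rfl
  constructor
  · rintro ⟨f, h1, h2, h3⟩; exact ⟨f, h1, h2, (key f).mp h3⟩
  · rintro ⟨f, h1, h2, h3⟩; exact ⟨f, h1, h2, (key f).mpr h3⟩
end

section
/- Attaching a caterpillar spine with a guaranteed-survival taxon preserves solutions: given a GNAP instance I on a star with leaves x_1,...,x_n and D = 1, construct the caterpillar tree with internal path v_1,...,v_n, edges (v_i, x_i), (v_i, v_{i+1}) for i < n, edges (v_n, x_n), (v_n, x*), all of weight 1, where x* has projects (0,0) and (1,1). Then S is a solution of I with budget B and threshold 1 if and only if S ∪ {the cost-1 project of x*} is a solution of the new instance with budget B+1 and threshold n+1. -/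
open Classical Finset in
/-- Attaching a caterpillar spine with a guaranteed-survival taxon `x*` (projects
`(0,0)` and `(1,1)`; its cost-1 project is selected) preserves solutions: a project
selection `σ` (one project per taxon) is a solution of the star instance with budget
`B` and threshold `1` iff together with the cost-1 project of `x*` it is a solution
of the caterpillar instance (spine `v_1,…,v_n`, all edge weights `1`) with budget
`B+1` and threshold `n+1`. The new PD is computed by the offspring-product formula:
the edge `(v_i,x_i)` contributes `w_i`, every spine edge `(v_i,v_{i+1})` has `x*`
among its offspring, and the edge `(v_n,x*)` carries probability `1`. -/
theorem stmt_12 (n : ℕ) (hn : 0 < n) (P : Fin n → Finset (ℕ × ℚ)) (B : ℕ)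
    (hw : ∀ i, ∀ p ∈ P i, 0 ≤ p.2 ∧ p.2 ≤ 1)
    (σ : Fin n → ℕ × ℚ) (hσ : ∀ i, σ i ∈ P i) :
    ((∑ i, (σ i).1) ≤ B ∧ (1 : ℚ) ≤ ∑ i, (1 : ℚ) * (σ i).2) ↔
    ((∑ i, (σ i).1) + 1 ≤ B + 1 ∧
      ((n : ℚ) + 1) ≤
        (∑ i, (1 : ℚ) * (1 - (1 - (σ i).2)))
        + (∑ i ∈ Finset.range (n - 1), (1 : ℚ) *
            (1 - (∏ j ∈ Finset.univ.filter (fun j : Fin n => i < j.1),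
              (1 - (σ j).2)) * (1 - 1)))
        + (1 : ℚ) * (1 - (1 - 1))) := by
  have hcard : ((n : ℚ) - 1) + 1 = n := by ring
  simp only [mul_zero, sub_zero, one_mul, sub_sub_cancel, mul_one, sub_self,
    Finset.sum_const, Finset.card_range, nsmul_eq_mul]
  have h1 : ((n - 1 : ℕ) : ℚ) = (n : ℚ) - 1 := by
    have : (1:ℕ) ≤ n := hn
    push_cast [this]; ring
  constructor
  · rintro ⟨h, h2⟩
    refine ⟨by omega, ?_⟩
    rw [h1]; linarith
  · rintro ⟨h, h2⟩
    refine ⟨by omega, ?_⟩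
    rw [h1] at h2; linarith
end

section
/- Penalty-Sum reduces to unit-cost GNAP on trees of height 2: the Penalty-Sum instance (T, k, Q, D) with tuples t_i = (a_i, b_i), a_i ≥ 0, b_i ∈ (0,1), has a solution S ⊆ T of size k with Σ_{t_i∈S} a_i - Q·Π_{t_i∈S} b_i ≥ D if and only if the GNAP instance on the tree with root r, child v of r, leaves x_1,...,x_n children of v, edge weights λ((r,v)) = 2^t·Q and λ((v,x_i)) = 2^t·a_i/(1-b_i), project lists P_i = ((0,0),(1,1-b_i)), budget k, and threshold 2^t(D+Q) has a solution (where 2^t clears all denominators to make weights integral). -/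
lemma stmt_15_aux (n Q t : ℕ) (D : ℚ) (a b : Fin n → ℚ)
    (hb : ∀ i, 0 < b i ∧ b i < 1) (S : Finset (Fin n)) :
    ((2 : ℚ) ^ t * (D + Q) ≤
        (∑ i ∈ S, ((2 : ℚ) ^ t * a i / (1 - b i)) * (1 - b i))
        + ((2 : ℚ) ^ t * Q) * (1 - ∏ i ∈ S, (1 - (1 - b i)))) ↔
      D ≤ (∑ i ∈ S, a i) - (Q : ℚ) * ∏ i ∈ S, b i := by
  have hsum : ∀ i ∈ S, ((2 : ℚ) ^ t * a i / (1 - b i)) * (1 - b i)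
      = (2 : ℚ) ^ t * a i := by
    intro i _
    have : (1 : ℚ) - b i ≠ 0 := by
      have := (hb i).2; linarith
    field_simp
  rw [Finset.sum_congr rfl hsum]
  have h2 : (0 : ℚ) < 2 ^ t := by positivity
  rw [← Finset.mul_sum]
  simp only [sub_sub_cancel]
  constructor
  · intro h
    rw [← mul_le_mul_iff_right₀ h2]
    ring_nf
    ring_nf at h
    linarith
  · intro h
    have := (mul_le_mul_iff_right₀ h2).mpr h
    ring_nf
    ring_nf at this
    linarith

/-- Penalty-Sum reduces to unit-cost GNAP on a tree of height 2 (root `r`, single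
child `v`, leaves `x_1,…,x_n`): the Penalty-Sum instance `(T,k,Q,D)` with tuples
`(a_i, b_i)` has a solution of size exactly `k` iff the GNAP instance with edge
weights `λ(r,v) = 2^t·Q`, `λ(v,x_i) = 2^t·a_i/(1-b_i)`, projects `(0,0)` and
`(1, 1-b_i)`, budget `k` and threshold `2^t·(D+Q)` has a solution (a set `S'` of
taxa receiving their cost-1 project, `|S'| ≤ k`, with
`PD = ∑_{i∈S'} λ(v,x_i)·(1-b_i) + λ(r,v)·(1 - ∏_{i∈S'}(1-(1-b_i))) ≥ 2^t(D+Q)`). -/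
theorem stmt_15 (n k Q t : ℕ) (hk : k ≤ n) (D : ℚ) (a b : Fin n → ℚ)
    (ha : ∀ i, 0 ≤ a i) (hb : ∀ i, 0 < b i ∧ b i < 1) :
    (∃ S : Finset (Fin n), S.card = k ∧
      D ≤ (∑ i ∈ S, a i) - (Q : ℚ) * ∏ i ∈ S, b i) ↔
    (∃ S' : Finset (Fin n), S'.card ≤ k ∧
      (2 : ℚ) ^ t * (D + Q) ≤
        (∑ i ∈ S', ((2 : ℚ) ^ t * a i / (1 - b i)) * (1 - b i))
        + ((2 : ℚ) ^ t * Q) * (1 - ∏ i ∈ S', (1 - (1 - b i)))) := by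
  constructor
  · rintro ⟨S, hcard, hle⟩
    exact ⟨S, le_of_eq hcard, (stmt_15_aux n Q t D a b hb S).mpr hle⟩
  · rintro ⟨S', hcard, hle⟩
    have hle' := (stmt_15_aux n Q t D a b hb S').mp hle
    obtain ⟨S, hSS, hScard⟩ := Finset.exists_superset_card_eq hcard
      (by simpa using hk)
    refine ⟨S, hScard, hle'.trans ?_⟩
    have hsum : ∑ i ∈ S', a i ≤ ∑ i ∈ S, a i :=
      Finset.sum_le_sum_of_subset_of_nonneg hSS (fun i _ _ => ha i)
    have hprod : ∏ i ∈ S, b i ≤ ∏ i ∈ S', b i := by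
      rw [← Finset.prod_sdiff hSS]
      have h1 : ∏ i ∈ S \ S', b i ≤ 1 :=
        Finset.prod_le_one (fun i _ => (hb i).1.le) (fun i _ => (hb i).2.le)
      have h2 : (0 : ℚ) ≤ ∏ i ∈ S', b i :=
        Finset.prod_nonneg (fun i _ => (hb i).1.le)
      nlinarith
    have hQ : (0 : ℚ) ≤ Q := Nat.cast_nonneg Q
    nlinarith
end

section
/- In the ultrametric reduction of Theorem on unit-cost GNAP, for S ⊆ X and S' = S ∪ X*, the expected phylogenetic diversity satisfies PD_{T'}(S') = (2^t - 1)·[PD_T(S) + (2^{t·|X_2|} - 1)·λ((r,v)) + |X_2|·(1 - 2^{-t})·λ((v,x_1))], where X* is the set of added dummy leaves x_i* (each with survival probability 1 - 2^{-t} at cost 1) and X_2 is the set of original leaves with λ(v,x_i) < λ(v,x_1). -/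
open Classical Finset in
/-- PD identity for the ultrametric reduction. For `S ⊆ X` and `S' = S ∪ X*`
(all dummy leaves selected with survival probability `1 - 2^{-t}`), with
`X₂ = {i : λ(v,x_i) ≠ λ(v,x_1)}` (here `lamMax = λ(v,x_1)`), the phylogenetic
diversity of `S'` in the constructed tree `T'` — computed edge by edge: the root
edge of weight `λ(r,v)·2^{t·|X₂|}·(2^t - 1)`, the edges to leaves of `X₁` of weight
`(2^t-1)·λ(v,x_1)`, and for `i ∈ X₂` the edges `(v,u_i)`, `(u_i,x_i)`, `(u_i,x_i*)` —
equals `(2^t - 1)·(PD_T (S) + (2^{t·|X₂|} - 1)·λ(r,v) + |X₂|·(1-2^{-t})·λ(v,x_1))`. -/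
theorem stmt_18 (n t : ℕ) (lam : Fin n → ℕ) (lamMax lamv : ℕ)
    (hmax : ∀ i, lam i ≤ lamMax) (w : Fin n → ℚ)
    (hw : ∀ i, 0 ≤ w i ∧ w i < 1) (S : Finset (Fin n)) :
    (((lamv : ℚ) * 2 ^ (t * (Finset.univ.filter (fun i : Fin n => lam i ≠ lamMax)).card)
        * ((2 : ℚ) ^ t - 1)) *
      (1 - (2 : ℚ) ^ (-((t * (Finset.univ.filter
              (fun i : Fin n => lam i ≠ lamMax)).card : ℕ) : ℤ)) *
            ∏ i ∈ S, (1 - w i)))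
    + (∑ i ∈ Finset.univ.filter (fun i : Fin n => lam i = lamMax),
        ((2 : ℚ) ^ t - 1) * (lamMax : ℚ) * (if i ∈ S then w i else 0))
    + (∑ i ∈ Finset.univ.filter (fun i : Fin n => lam i ≠ lamMax),
        ((2 : ℚ) ^ t * ((lamMax : ℚ) - (lam i : ℚ))
            * (1 - (1 - (if i ∈ S then w i else 0)) * (2 : ℚ) ^ (-(t : ℤ)))
         + ((2 : ℚ) ^ t * (lam i : ℚ) - (lamMax : ℚ)) * (if i ∈ S then w i else 0)
         + ((2 : ℚ) ^ t * (lam i : ℚ) - (lamMax : ℚ)) * (1 - (2 : ℚ) ^ (-(t : ℤ)))))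
    = ((2 : ℚ) ^ t - 1) *
        (((∑ i ∈ S, (lam i : ℚ) * w i) + (lamv : ℚ) * (1 - ∏ i ∈ S, (1 - w i)))
         + ((2 : ℚ) ^ (t * (Finset.univ.filter
              (fun i : Fin n => lam i ≠ lamMax)).card) - 1) * (lamv : ℚ)
         + ((Finset.univ.filter (fun i : Fin n => lam i ≠ lamMax)).card : ℚ)
            * (1 - (2 : ℚ) ^ (-(t : ℤ))) * (lamMax : ℚ)) := by
  set X2 := Finset.univ.filter (fun i : Fin n => lam i ≠ lamMax) with hX2
  set X1 := Finset.univ.filter (fun i : Fin n => lam i = lamMax) with hX1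
  set k := X2.card with hk
  have two_ne : (2 : ℚ) ≠ 0 := by norm_num
  have hA : (2:ℚ) ^ (-(t:ℤ)) * 2 ^ t = 1 := by
    rw [← zpow_natCast (2:ℚ) t, ← zpow_add₀ two_ne]
    simp
  have hC : (2:ℚ) ^ (-((t * k : ℕ):ℤ)) * 2 ^ (t * k) = 1 := by
    rw [← zpow_natCast (2:ℚ) (t * k), ← zpow_add₀ two_ne]
    simp
  -- split the PD sum over S into X₁ and X₂ parts
  have hsum : (∑ i ∈ S, (lam i : ℚ) * w i)
      = (∑ i ∈ X1, (lamMax:ℚ) * (if i ∈ S then w i else 0))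
      + (∑ i ∈ X2, (lam i:ℚ) * (if i ∈ S then w i else 0)) := by
    have h1 : ∀ i ∈ X1, (lamMax:ℚ) * (if i ∈ S then w i else 0)
        = ((lam i : ℚ) * (if i ∈ S then w i else 0)) := by
      intro i hi
      rw [hX1, Finset.mem_filter] at hi
      rw [hi.2]
    rw [Finset.sum_congr rfl h1]
    have h2 : ∀ i, (lam i : ℚ) * (if i ∈ S then w i else 0)
        = (if i ∈ S then (lam i : ℚ) * w i else 0) := by
      intro i; split <;> simp
    simp_rw [h2]
    rw [Finset.sum_filter_add_sum_filter_not Finset.univ (fun i => lam i = lamMax)]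
    rw [Finset.sum_ite_mem, Finset.univ_inter]
  -- simplify the per-element X₂ contribution
  have hX2sum : (∑ i ∈ X2,
        ((2 : ℚ) ^ t * ((lamMax : ℚ) - (lam i : ℚ))
            * (1 - (1 - (if i ∈ S then w i else 0)) * (2 : ℚ) ^ (-(t : ℤ)))
         + ((2 : ℚ) ^ t * (lam i : ℚ) - (lamMax : ℚ)) * (if i ∈ S then w i else 0)
         + ((2 : ℚ) ^ t * (lam i : ℚ) - (lamMax : ℚ)) * (1 - (2 : ℚ) ^ (-(t : ℤ)))))
      = ((2:ℚ)^t - 1) * (∑ i ∈ X2, (lam i:ℚ) * (if i ∈ S then w i else 0))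
        + (k : ℚ) * ((lamMax:ℚ) * ((2:ℚ)^t - 1) * (1 - (2:ℚ) ^ (-(t:ℤ)))) := by
    have := Finset.sum_congr rfl (fun i (_ : i ∈ X2) => by
      show ((2 : ℚ) ^ t * ((lamMax : ℚ) - (lam i : ℚ))
            * (1 - (1 - (if i ∈ S then w i else 0)) * (2 : ℚ) ^ (-(t : ℤ)))
         + ((2 : ℚ) ^ t * (lam i : ℚ) - (lamMax : ℚ)) * (if i ∈ S then w i else 0)
         + ((2 : ℚ) ^ t * (lam i : ℚ) - (lamMax : ℚ)) * (1 - (2 : ℚ) ^ (-(t : ℤ))))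
        = ((2:ℚ)^t - 1) * ((lam i:ℚ) * (if i ∈ S then w i else 0))
          + ((lamMax:ℚ) * ((2:ℚ)^t - 1) * (1 - (2:ℚ) ^ (-(t:ℤ))))
      linear_combination (((lamMax:ℚ) - (lam i:ℚ)) * (if i ∈ S then w i else 0)) * hA)
    rw [this, Finset.sum_add_distrib, Finset.sum_const, ← Finset.mul_sum, nsmul_eq_mul]
  rw [hX2sum, hsum]
  have hcard : (∑ i ∈ X1, ((2:ℚ)^t - 1) * (lamMax:ℚ) * (if i ∈ S then w i else 0))
      = ((2:ℚ)^t - 1) * ∑ i ∈ X1, (lamMax:ℚ) * (if i ∈ S then w i else 0) := by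
    rw [Finset.mul_sum]
    exact Finset.sum_congr rfl fun i _ => mul_assoc _ _ _
  rw [hcard]
  linear_combination (-(((2:ℚ)^t - 1) * (lamv:ℚ) * ∏ i ∈ S, (1 - w i))) * hC
end

section
/- In the ultrametric reduction, any solution S' for the constructed instance I' can be transformed into a solution containing all dummy leaves X*: if x_i* ∉ S', then either swapping x_i for x_i* (when x_i ∈ S'), taking S' = X* (when S' ⊂ X*), or swapping some x_j ∈ S' for x_i* yields a set of the same or smaller size whose phylogenetic diversity is at least that of S'; hence if I' has a solution, it has one containing X*. -/
open Classical Finset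

/-- The set `X₂` of original taxa whose edge weight is not maximal; these are the
taxa that receive a dummy sibling `x_i*` in the ultrametric gadget. -/
noncomputable def gadgetX2 (n : ℕ) (lam : Fin n → ℕ) (lamMax : ℕ) : Finset (Fin n) :=
  Finset.univ.filter (fun i : Fin n => lam i ≠ lamMax)

/-- PD in the tree `T'` of the ultrametric reduction, for a selection `SO` of
original taxa (each with survival probability `w i`) and a selection `SD ⊆ X₂`
of dummy taxa (each with survival probability `1 - 2^{-t}`); all other taxa keep
probability `0`. Edges as in the gadget: root edge of weight
`λ(r,v)·2^{t·|X₂|}·(2^t-1)`, edges of weight `(2^t-1)·lamMax` to the leaves of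
`X₁`, and for `i ∈ X₂` edges `(v,u_i)`, `(u_i,x_i)`, `(u_i,x_i*)` of weights
`2^t(lamMax - λ_i)` and `2^t·λ_i - lamMax`. -/
noncomputable def gadgetPD (n t : ℕ) (lam : Fin n → ℕ) (lamMax lamv : ℕ)
    (w : Fin n → ℚ) (SO SD : Finset (Fin n)) : ℚ :=
  (((lamv : ℚ) * 2 ^ (t * (gadgetX2 n lam lamMax).card) * ((2 : ℚ) ^ t - 1)) *
      (1 - (∏ i ∈ SO, (1 - w i)) * ∏ _i ∈ SD, (2 : ℚ) ^ (-(t : ℤ))))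
  + (∑ i ∈ Finset.univ.filter (fun i : Fin n => lam i = lamMax),
      ((2 : ℚ) ^ t - 1) * (lamMax : ℚ) * (if i ∈ SO then w i else 0))
  + (∑ i ∈ gadgetX2 n lam lamMax,
      ((2 : ℚ) ^ t * ((lamMax : ℚ) - (lam i : ℚ))
          * (1 - (1 - (if i ∈ SO then w i else 0))
              * (1 - (if i ∈ SD then 1 - (2 : ℚ) ^ (-(t : ℤ)) else 0)))
       + ((2 : ℚ) ^ t * (lam i : ℚ) - (lamMax : ℚ)) * (if i ∈ SO then w i else 0)
       + ((2 : ℚ) ^ t * (lam i : ℚ) - (lamMax : ℚ))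
          * (if i ∈ SD then 1 - (2 : ℚ) ^ (-(t : ℤ)) else 0)))

section helpers

variable (n t : ℕ) (lam : Fin n → ℕ) (lamMax lamv : ℕ) (w : Fin n → ℚ)

lemma pd_insert (ht : 1 ≤ t)
    (hmax : ∀ i, lam i ≤ lamMax) (hbig : ∀ i, (lamMax : ℚ) < 2 ^ t * (lam i : ℚ))
    (hw : ∀ i, 0 ≤ w i ∧ w i < 1 - (2 : ℚ) ^ (-(t : ℤ)))
    (SO SD : Finset (Fin n)) (i : Fin n)
    (hi : i ∈ gadgetX2 n lam lamMax) (hiSD : i ∉ SD) :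
    gadgetPD n t lam lamMax lamv w SO SD ≤
      gadgetPD n t lam lamMax lamv w SO (insert i SD) := by
  have hc0 : (0:ℚ) < (2:ℚ)^(-(t:ℤ)) := by positivity
  have hc1 : (2:ℚ)^(-(t:ℤ)) < 1 := by
    have h : (2:ℚ)^(-(t:ℤ)) < (2:ℚ)^(0:ℤ) := by
      apply zpow_lt_zpow_right₀ (by norm_num); omega
    simpa using h
  have h2t : (1:ℚ) ≤ 2 ^ t := one_le_pow₀ (by norm_num)
  have hR : (0:ℚ) ≤ (lamv : ℚ) * 2 ^ (t * (gadgetX2 n lam lamMax).card) * ((2:ℚ)^t - 1) := by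
    have h0 : (0:ℚ) ≤ (lamv : ℚ) * 2 ^ (t * (gadgetX2 n lam lamMax).card) := by positivity
    nlinarith
  have hw1 : ∀ k : Fin n, 0 ≤ 1 - w k := fun k => by have := (hw k).2; linarith
  have hPSO : 0 ≤ ∏ x ∈ SO, (1 - w x) := Finset.prod_nonneg fun x _ => hw1 x
  have hQ : 0 ≤ ∏ _x ∈ SD, (2:ℚ)^(-(t:ℤ)) := Finset.prod_nonneg fun _ _ => hc0.le
  have hA : (0:ℚ) ≤ 2 ^ t * ((lamMax : ℚ) - (lam i : ℚ)) := by
    have : (lam i : ℚ) ≤ (lamMax : ℚ) := by exact_mod_cast hmax i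
    have h2 : (0:ℚ) ≤ (2:ℚ)^t := by positivity
    nlinarith
  have hC : (0:ℚ) ≤ 2 ^ t * (lam i : ℚ) - (lamMax : ℚ) := le_of_lt (by linarith [hbig i])
  unfold gadgetPD
  apply add_le_add (add_le_add ?_ le_rfl) ?_
  · -- root
    rw [Finset.prod_insert hiSD]
    apply mul_le_mul_of_nonneg_left _ hR
    have h1 : 0 ≤ (∏ x ∈ SO, (1 - w x)) * (∏ _x ∈ SD, (2:ℚ)^(-(t:ℤ))) * (1 - (2:ℚ)^(-(t:ℤ))) :=
      mul_nonneg (mul_nonneg hPSO hQ) (by linarith)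
    nlinarith [h1]
  · -- X2 sum
    rw [← Finset.add_sum_erase _ _ hi, ← Finset.add_sum_erase _ _ hi]
    apply add_le_add
    · simp only [hiSD, Finset.mem_insert_self, if_true, if_neg hiSD, if_pos]
      by_cases hiSO : i ∈ SO <;>
        simp only [hiSO, if_true, if_false] <;>
        nlinarith [mul_nonneg (mul_nonneg hA (hw1 i)) (by linarith : (0:ℚ) ≤ 1 - (2:ℚ)^(-(t:ℤ))),
          mul_nonneg hA (by linarith : (0:ℚ) ≤ 1 - (2:ℚ)^(-(t:ℤ))),
          mul_nonneg hC (by linarith : (0:ℚ) ≤ 1 - (2:ℚ)^(-(t:ℤ))), hc0, hc1, (hw i).1, (hw i).2]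
    · apply le_of_eq
      apply Finset.sum_congr rfl
      intro k hk
      have hki : k ≠ i := Finset.ne_of_mem_erase hk
      simp [Finset.mem_insert, hki]

end helpers

section swap

variable (n t : ℕ) (lam : Fin n → ℕ) (lamMax lamv : ℕ) (w : Fin n → ℚ)

set_option maxHeartbeats 2000000 in
lemma pd_swap (ht : 1 ≤ t)
    (hmax : ∀ i, lam i ≤ lamMax) (hbig : ∀ i, (lamMax : ℚ) < 2 ^ t * (lam i : ℚ))
    (hw : ∀ i, 0 ≤ w i ∧ w i < 1 - (2 : ℚ) ^ (-(t : ℤ)))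
    (SO SD : Finset (Fin n)) (i j : Fin n)
    (hi : i ∈ gadgetX2 n lam lamMax) (hiSD : i ∉ SD) (hj : j ∈ SO)
    (hji : i ∈ SO → j = i) :
    gadgetPD n t lam lamMax lamv w SO SD ≤
      gadgetPD n t lam lamMax lamv w (SO.erase j) (insert i SD) := by
  have hc0 : (0:ℚ) < (2:ℚ)^(-(t:ℤ)) := by positivity
  have hc1 : (2:ℚ)^(-(t:ℤ)) < 1 := by
    have h : (2:ℚ)^(-(t:ℤ)) < (2:ℚ)^(0:ℤ) := by
      apply zpow_lt_zpow_right₀ (by norm_num); omega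
    simpa using h
  have h2t : (1:ℚ) ≤ 2 ^ t := one_le_pow₀ (by norm_num)
  have hR : (0:ℚ) ≤ (lamv : ℚ) * 2 ^ (t * (gadgetX2 n lam lamMax).card) * ((2:ℚ)^t - 1) := by
    have h0 : (0:ℚ) ≤ (lamv : ℚ) * 2 ^ (t * (gadgetX2 n lam lamMax).card) := by positivity
    nlinarith
  have hw1 : ∀ k : Fin n, 0 ≤ 1 - w k := fun k => by have := (hw k).2; linarith
  have hPe : 0 ≤ ∏ x ∈ SO.erase j, (1 - w x) := Finset.prod_nonneg fun x _ => hw1 x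
  have hQ : 0 ≤ ∏ _x ∈ SD, (2:ℚ)^(-(t:ℤ)) := Finset.prod_nonneg fun _ _ => hc0.le
  have hA : ∀ k : Fin n, (0:ℚ) ≤ 2 ^ t * ((lamMax : ℚ) - (lam k : ℚ)) := by
    intro k
    have h1 : (lam k : ℚ) ≤ (lamMax : ℚ) := by exact_mod_cast hmax k
    have h2 : (0:ℚ) ≤ (2:ℚ)^t := by positivity
    nlinarith
  have hC : ∀ k : Fin n, (0:ℚ) ≤ 2 ^ t * (lam k : ℚ) - (lamMax : ℚ) :=
    fun k => le_of_lt (by linarith [hbig k])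
  have hilam : lam i ≠ lamMax := by
    simpa [gadgetX2] using hi
  have hroot : ((lamv : ℚ) * 2 ^ (t * (gadgetX2 n lam lamMax).card) * ((2:ℚ)^t - 1)) *
      (1 - (∏ x ∈ SO, (1 - w x)) * ∏ _x ∈ SD, (2:ℚ)^(-(t:ℤ))) ≤
      ((lamv : ℚ) * 2 ^ (t * (gadgetX2 n lam lamMax).card) * ((2:ℚ)^t - 1)) *
      (1 - (∏ x ∈ SO.erase j, (1 - w x)) * ∏ _x ∈ insert i SD, (2:ℚ)^(-(t:ℤ))) := by
    rw [Finset.prod_insert hiSD, ← Finset.mul_prod_erase SO _ hj]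
    apply mul_le_mul_of_nonneg_left _ hR
    have h1 : 0 ≤ (∏ x ∈ SO.erase j, (1 - w x)) * (∏ _x ∈ SD, (2:ℚ)^(-(t:ℤ)))
        * ((1 - w j) - (2:ℚ)^(-(t:ℤ))) :=
      mul_nonneg (mul_nonneg hPe hQ) (by linarith [(hw j).2])
    nlinarith [h1]
  unfold gadgetPD
  by_cases hiSO : i ∈ SO
  · -- case A : j = i
    obtain rfl := hji hiSO
    have hX1 : ∑ k ∈ Finset.univ.filter (fun k : Fin n => lam k = lamMax),
        ((2:ℚ)^t - 1) * (lamMax : ℚ) * (if k ∈ SO then w k else 0) =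
        ∑ k ∈ Finset.univ.filter (fun k : Fin n => lam k = lamMax),
        ((2:ℚ)^t - 1) * (lamMax : ℚ) * (if k ∈ SO.erase j then w k else 0) := by
      apply Finset.sum_congr rfl
      intro k hk
      have hklam : lam k = lamMax := by simpa using hk
      have hki : k ≠ j := fun h => hilam (h ▸ hklam)
      simp [Finset.mem_erase, hki]
    apply add_le_add (add_le_add hroot hX1.le) ?_
    rw [← Finset.add_sum_erase _ _ hi, ← Finset.add_sum_erase _ _ hi]
    apply add_le_add
    · simp only [hiSO, hiSD, Finset.notMem_erase, Finset.mem_insert_self,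
        if_true, if_false, if_pos, if_neg, not_false_iff]
      nlinarith [mul_nonneg (hA j) (by linarith [(hw j).2] : (0:ℚ) ≤ 1 - (2:ℚ)^(-(t:ℤ)) - w j),
        mul_nonneg (hC j) (by linarith [(hw j).2] : (0:ℚ) ≤ 1 - (2:ℚ)^(-(t:ℤ)) - w j)]
    · apply le_of_eq
      apply Finset.sum_congr rfl
      intro k hk
      have hki : k ≠ j := Finset.ne_of_mem_erase hk
      simp [Finset.mem_insert, Finset.mem_erase, hki]
  · -- case B : i ∉ SO
    have hne : j ≠ i := fun h => hiSO (h ▸ hj)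
    by_cases hjlam : lam j = lamMax
    · -- B2 : j ∈ X1
      have hjX1 : j ∈ Finset.univ.filter (fun k : Fin n => lam k = lamMax) :=
        Finset.mem_filter.mpr ⟨Finset.mem_univ _, hjlam⟩
      rw [← Finset.add_sum_erase _ _ hjX1, ← Finset.add_sum_erase _ _ hjX1,
        ← Finset.add_sum_erase _ _ hi, ← Finset.add_sum_erase _ _ hi]
      have hS1 : ∑ k ∈ (Finset.univ.filter (fun k : Fin n => lam k = lamMax)).erase j,
          ((2:ℚ)^t - 1) * (lamMax : ℚ) * (if k ∈ SO then w k else 0) =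
          ∑ k ∈ (Finset.univ.filter (fun k : Fin n => lam k = lamMax)).erase j,
          ((2:ℚ)^t - 1) * (lamMax : ℚ) * (if k ∈ SO.erase j then w k else 0) := by
        apply Finset.sum_congr rfl
        intro k hk
        have hkj : k ≠ j := Finset.ne_of_mem_erase hk
        simp [Finset.mem_erase, hkj]
      have hS2 : ∑ k ∈ (gadgetX2 n lam lamMax).erase i,
          ((2 : ℚ) ^ t * ((lamMax : ℚ) - (lam k : ℚ))
              * (1 - (1 - (if k ∈ SO then w k else 0))
                  * (1 - (if k ∈ SD then 1 - (2 : ℚ) ^ (-(t : ℤ)) else 0)))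
           + ((2 : ℚ) ^ t * (lam k : ℚ) - (lamMax : ℚ)) * (if k ∈ SO then w k else 0)
           + ((2 : ℚ) ^ t * (lam k : ℚ) - (lamMax : ℚ))
              * (if k ∈ SD then 1 - (2 : ℚ) ^ (-(t : ℤ)) else 0)) =
          ∑ k ∈ (gadgetX2 n lam lamMax).erase i,
          ((2 : ℚ) ^ t * ((lamMax : ℚ) - (lam k : ℚ))
              * (1 - (1 - (if k ∈ SO.erase j then w k else 0))
                  * (1 - (if k ∈ insert i SD then 1 - (2 : ℚ) ^ (-(t : ℤ)) else 0)))
           + ((2 : ℚ) ^ t * (lam k : ℚ) - (lamMax : ℚ)) * (if k ∈ SO.erase j then w k else 0)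
           + ((2 : ℚ) ^ t * (lam k : ℚ) - (lamMax : ℚ))
              * (if k ∈ insert i SD then 1 - (2 : ℚ) ^ (-(t : ℤ)) else 0)) := by
        apply Finset.sum_congr rfl
        intro k hk
        have hki : k ≠ i := Finset.ne_of_mem_erase hk
        have hkX2 : k ∈ gadgetX2 n lam lamMax := Finset.mem_of_mem_erase hk
        have hklam : lam k ≠ lamMax := by simpa [gadgetX2] using hkX2
        have hkj : k ≠ j := fun h => hklam (h ▸ hjlam)
        simp [Finset.mem_insert, Finset.mem_erase, hki, hkj]
      rw [hS1, hS2]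
      have hterm : ((2:ℚ)^t - 1) * (lamMax : ℚ) * (if j ∈ SO then w j else 0)
            + ((2 : ℚ) ^ t * ((lamMax : ℚ) - (lam i : ℚ))
              * (1 - (1 - (if i ∈ SO then w i else 0))
                  * (1 - (if i ∈ SD then 1 - (2 : ℚ) ^ (-(t : ℤ)) else 0)))
             + ((2 : ℚ) ^ t * (lam i : ℚ) - (lamMax : ℚ)) * (if i ∈ SO then w i else 0)
             + ((2 : ℚ) ^ t * (lam i : ℚ) - (lamMax : ℚ))
                * (if i ∈ SD then 1 - (2 : ℚ) ^ (-(t : ℤ)) else 0)) ≤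
          ((2:ℚ)^t - 1) * (lamMax : ℚ) * (if j ∈ SO.erase j then w j else 0)
            + ((2 : ℚ) ^ t * ((lamMax : ℚ) - (lam i : ℚ))
              * (1 - (1 - (if i ∈ SO.erase j then w i else 0))
                  * (1 - (if i ∈ insert i SD then 1 - (2 : ℚ) ^ (-(t : ℤ)) else 0)))
             + ((2 : ℚ) ^ t * (lam i : ℚ) - (lamMax : ℚ)) * (if i ∈ SO.erase j then w i else 0)
             + ((2 : ℚ) ^ t * (lam i : ℚ) - (lamMax : ℚ))
                * (if i ∈ insert i SD then 1 - (2 : ℚ) ^ (-(t : ℤ)) else 0)) := by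
        have hiej : i ∉ SO.erase j := fun h => hiSO (Finset.mem_of_mem_erase h)
        simp only [hj, hiSO, hiSD, hiej, Finset.notMem_erase, Finset.mem_insert_self,
          if_true, if_false, if_pos, if_neg, not_false_iff]
        nlinarith [mul_nonneg (mul_nonneg (by linarith : (0:ℚ) ≤ (2:ℚ)^t - 1) (Nat.cast_nonneg lamMax))
            (by linarith [(hw j).2] : (0:ℚ) ≤ 1 - (2:ℚ)^(-(t:ℤ)) - w j)]
      linarith [hroot, hterm]
    · -- B1 : j ∈ X2
      have hjX2 : j ∈ gadgetX2 n lam lamMax := by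
        simp [gadgetX2, hjlam]
      have hX1 : ∑ k ∈ Finset.univ.filter (fun k : Fin n => lam k = lamMax),
          ((2:ℚ)^t - 1) * (lamMax : ℚ) * (if k ∈ SO then w k else 0) =
          ∑ k ∈ Finset.univ.filter (fun k : Fin n => lam k = lamMax),
          ((2:ℚ)^t - 1) * (lamMax : ℚ) * (if k ∈ SO.erase j then w k else 0) := by
        apply Finset.sum_congr rfl
        intro k hk
        have hklam : lam k = lamMax := by simpa using hk
        have hkj : k ≠ j := fun h => hjlam (h ▸ hklam)
        simp [Finset.mem_erase, hkj]
      have hj' : j ∈ (gadgetX2 n lam lamMax).erase i := Finset.mem_erase.mpr ⟨hne, hjX2⟩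
      rw [hX1, ← Finset.add_sum_erase _ _ hi, ← Finset.add_sum_erase _ _ hi,
        ← Finset.add_sum_erase _ _ hj', ← Finset.add_sum_erase _ _ hj']
      have hS2 : ∑ k ∈ ((gadgetX2 n lam lamMax).erase i).erase j,
          ((2 : ℚ) ^ t * ((lamMax : ℚ) - (lam k : ℚ))
              * (1 - (1 - (if k ∈ SO then w k else 0))
                  * (1 - (if k ∈ SD then 1 - (2 : ℚ) ^ (-(t : ℤ)) else 0)))
           + ((2 : ℚ) ^ t * (lam k : ℚ) - (lamMax : ℚ)) * (if k ∈ SO then w k else 0)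
           + ((2 : ℚ) ^ t * (lam k : ℚ) - (lamMax : ℚ))
              * (if k ∈ SD then 1 - (2 : ℚ) ^ (-(t : ℤ)) else 0)) =
          ∑ k ∈ ((gadgetX2 n lam lamMax).erase i).erase j,
          ((2 : ℚ) ^ t * ((lamMax : ℚ) - (lam k : ℚ))
              * (1 - (1 - (if k ∈ SO.erase j then w k else 0))
                  * (1 - (if k ∈ insert i SD then 1 - (2 : ℚ) ^ (-(t : ℤ)) else 0)))
           + ((2 : ℚ) ^ t * (lam k : ℚ) - (lamMax : ℚ)) * (if k ∈ SO.erase j then w k else 0)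
           + ((2 : ℚ) ^ t * (lam k : ℚ) - (lamMax : ℚ))
              * (if k ∈ insert i SD then 1 - (2 : ℚ) ^ (-(t : ℤ)) else 0)) := by
        apply Finset.sum_congr rfl
        intro k hk
        have hkj : k ≠ j := Finset.ne_of_mem_erase hk
        have hki : k ≠ i := Finset.ne_of_mem_erase (Finset.mem_of_mem_erase hk)
        simp [Finset.mem_insert, Finset.mem_erase, hki, hkj]
      rw [hS2]
      have hiej : i ∉ SO.erase j := fun h => hiSO (Finset.mem_of_mem_erase h)
      have hterm : ((2 : ℚ) ^ t * ((lamMax : ℚ) - (lam i : ℚ))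
              * (1 - (1 - (if i ∈ SO then w i else 0))
                  * (1 - (if i ∈ SD then 1 - (2 : ℚ) ^ (-(t : ℤ)) else 0)))
             + ((2 : ℚ) ^ t * (lam i : ℚ) - (lamMax : ℚ)) * (if i ∈ SO then w i else 0)
             + ((2 : ℚ) ^ t * (lam i : ℚ) - (lamMax : ℚ))
                * (if i ∈ SD then 1 - (2 : ℚ) ^ (-(t : ℤ)) else 0))
           + ((2 : ℚ) ^ t * ((lamMax : ℚ) - (lam j : ℚ))
              * (1 - (1 - (if j ∈ SO then w j else 0))
                  * (1 - (if j ∈ SD then 1 - (2 : ℚ) ^ (-(t : ℤ)) else 0)))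
             + ((2 : ℚ) ^ t * (lam j : ℚ) - (lamMax : ℚ)) * (if j ∈ SO then w j else 0)
             + ((2 : ℚ) ^ t * (lam j : ℚ) - (lamMax : ℚ))
                * (if j ∈ SD then 1 - (2 : ℚ) ^ (-(t : ℤ)) else 0)) ≤
          ((2 : ℚ) ^ t * ((lamMax : ℚ) - (lam i : ℚ))
              * (1 - (1 - (if i ∈ SO.erase j then w i else 0))
                  * (1 - (if i ∈ insert i SD then 1 - (2 : ℚ) ^ (-(t : ℤ)) else 0)))
             + ((2 : ℚ) ^ t * (lam i : ℚ) - (lamMax : ℚ)) * (if i ∈ SO.erase j then w i else 0)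
             + ((2 : ℚ) ^ t * (lam i : ℚ) - (lamMax : ℚ))
                * (if i ∈ insert i SD then 1 - (2 : ℚ) ^ (-(t : ℤ)) else 0))
           + ((2 : ℚ) ^ t * ((lamMax : ℚ) - (lam j : ℚ))
              * (1 - (1 - (if j ∈ SO.erase j then w j else 0))
                  * (1 - (if j ∈ insert i SD then 1 - (2 : ℚ) ^ (-(t : ℤ)) else 0)))
             + ((2 : ℚ) ^ t * (lam j : ℚ) - (lamMax : ℚ)) * (if j ∈ SO.erase j then w j else 0)
             + ((2 : ℚ) ^ t * (lam j : ℚ) - (lamMax : ℚ))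
                * (if j ∈ insert i SD then 1 - (2 : ℚ) ^ (-(t : ℤ)) else 0)) := by
        simp only [hj, hiSO, hiSD, hiej, Finset.notMem_erase, Finset.mem_insert_self,
          Finset.mem_insert, hne, false_or, if_true, if_false, if_pos, if_neg, not_false_iff]
        by_cases hjSD : j ∈ SD <;>
          simp only [hjSD, if_true, if_false] <;>
          nlinarith [mul_nonneg (mul_nonneg (hA j) (hw j).1)
              (by linarith : (0:ℚ) ≤ 1 - (2:ℚ)^(-(t:ℤ))),
            mul_nonneg (add_nonneg (hA j) (hC j))
              (by linarith [(hw j).2] : (0:ℚ) ≤ 1 - (2:ℚ)^(-(t:ℤ)) - w j),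
            mul_nonneg (add_nonneg (hA i) (hC i))
              (by linarith [(hw j).2] : (0:ℚ) ≤ 1 - (2:ℚ)^(-(t:ℤ)) - w j)]
      linarith [hroot, hterm]

end swap

/-- In the ultrametric reduction, every dummy leaf has survival probability
`1 - 2^{-t}` strictly exceeding every original survival probability, every project
has cost `1`, and the budget is `B + |X*|`. If the constructed instance has a
solution (a selection of original taxa `SO` and dummies `SD ⊆ X₂` with
`|SO| + |SD| ≤ B + |X₂|` and PD at least `D'`), then — by swapping `x_i` for `x_i*`,
taking all of `X*`, or swapping some selected `x_j` for `x_i*` — it has a solution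
containing all dummy leaves `X* = X₂`. -/
theorem stmt_19 (n t B : ℕ) (ht : 1 ≤ t) (lam : Fin n → ℕ) (lamMax lamv : ℕ)
    (hmax : ∀ i, lam i ≤ lamMax)
    (hbig : ∀ i, (lamMax : ℚ) < 2 ^ t * (lam i : ℚ))
    (w : Fin n → ℚ) (hw : ∀ i, 0 ≤ w i ∧ w i < 1 - (2 : ℚ) ^ (-(t : ℤ)))
    (D' : ℚ)
    (hsol : ∃ SO SD : Finset (Fin n), SD ⊆ gadgetX2 n lam lamMax ∧
      SO.card + SD.card ≤ B + (gadgetX2 n lam lamMax).card ∧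
      D' ≤ gadgetPD n t lam lamMax lamv w SO SD) :
    ∃ SO : Finset (Fin n), SO.card ≤ B ∧
      D' ≤ gadgetPD n t lam lamMax lamv w SO (gadgetX2 n lam lamMax) := by
  obtain ⟨SO, SD, hSD, hcard, hPD⟩ := hsol
  suffices H : ∀ k (SO SD : Finset (Fin n)), SD ⊆ gadgetX2 n lam lamMax →
      (gadgetX2 n lam lamMax \ SD).card = k →
      SO.card + SD.card ≤ B + (gadgetX2 n lam lamMax).card →
      ∃ SO' : Finset (Fin n), SO'.card ≤ B ∧
        gadgetPD n t lam lamMax lamv w SO SD ≤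
          gadgetPD n t lam lamMax lamv w SO' (gadgetX2 n lam lamMax) by
    obtain ⟨SO', h1, h2⟩ := H _ SO SD hSD rfl hcard
    exact ⟨SO', h1, le_trans hPD h2⟩
  intro k
  induction k with
  | zero =>
    intro SO SD hsub hk hcard
    have hemp : gadgetX2 n lam lamMax \ SD = ∅ := Finset.card_eq_zero.mp hk
    have hSDeq : SD = gadgetX2 n lam lamMax := by
      apply Finset.Subset.antisymm hsub
      intro x hx
      by_contra hxn
      have : x ∈ gadgetX2 n lam lamMax \ SD := Finset.mem_sdiff.mpr ⟨hx, hxn⟩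
      simp [hemp] at this
    subst hSDeq
    exact ⟨SO, by omega, le_rfl⟩
  | succ k ih =>
    intro SO SD hsub hk hcard
    have hne : (gadgetX2 n lam lamMax \ SD).Nonempty := by
      rw [← Finset.card_pos, hk]; omega
    obtain ⟨i, hi⟩ := hne
    have hiX2 : i ∈ gadgetX2 n lam lamMax := (Finset.mem_sdiff.mp hi).1
    have hiSD : i ∉ SD := (Finset.mem_sdiff.mp hi).2
    have hsub' : insert i SD ⊆ gadgetX2 n lam lamMax := Finset.insert_subset hiX2 hsub
    have hk' : (gadgetX2 n lam lamMax \ insert i SD).card = k := by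
      rw [Finset.sdiff_insert, Finset.card_erase_of_mem hi, hk]; omega
    have hcardSD : (insert i SD).card = SD.card + 1 := Finset.card_insert_of_notMem hiSD
    by_cases hb : SO.card + SD.card < B + (gadgetX2 n lam lamMax).card
    · obtain ⟨SO', h1, h2⟩ := ih SO (insert i SD) hsub' hk' (by omega)
      exact ⟨SO', h1,
        le_trans (pd_insert n t lam lamMax lamv w ht hmax hbig hw SO SD i hiX2 hiSD) h2⟩
    · have hSDlt : SD.card < (gadgetX2 n lam lamMax).card :=
        Finset.card_lt_card ⟨hsub, fun h => hiSD (h hiX2)⟩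
      have hSOpos : 0 < SO.card := by omega
      by_cases hiSO : i ∈ SO
      · obtain ⟨SO', h1, h2⟩ := ih (SO.erase i) (insert i SD) hsub' hk'
          (by rw [Finset.card_erase_of_mem hiSO, hcardSD]; omega)
        exact ⟨SO', h1,
          le_trans (pd_swap n t lam lamMax lamv w ht hmax hbig hw SO SD i i hiX2 hiSD hiSO
            (fun _ => rfl)) h2⟩
      · obtain ⟨j, hj⟩ := Finset.card_pos.mp hSOpos
        obtain ⟨SO', h1, h2⟩ := ih (SO.erase j) (insert i SD) hsub' hk'
          (by rw [Finset.card_erase_of_mem hj, hcardSD]; omega)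
        exact ⟨SO', h1,
          le_trans (pd_swap n t lam lamMax lamv w ht hmax hbig hw SO SD i j hiX2 hiSD hj
            (fun h => absurd h hiSO)) h2⟩
end
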